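/- In a finite lattice, for any element α with set of lower covers α⁻, the Moebius-inverted atom satisfies f_∂^α = f_∩^α − max_{β ∈ α⁻} f_∩^β, provided f_∩ satisfies the maximum-minimums identity structure of the antichain lattice; in particular for the antichain lattice with f_∩^α(ω) = min_{a∈α} f(ω;E^a), f_∂^α(ω) = f_∩^α(ω) − max_{β ∈ α⁻} min_{b∈β} f(ω;E^b). -/

import Mathlib

attribute [local instance] Classical.propDecidable

/-- Efficiency between two vertices: reciprocal of shortest-path length, 0 if disconnected. -/
noncomputable def eff {V : Type*} (G : SimpleGraph V) (x y : V) : ℝ :=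
  if G.Reachable x y then ((G.dist x y : ℝ))⁻¹ else 0

/-- The antichain lattice over `{1,...,N}`: nonempty antichains of nonempty subsets. -/
def Antichains (N : ℕ) : Type :=
  {α : Finset (Finset (Fin N)) //
    α.Nonempty ∧ (∀ a ∈ α, a.Nonempty) ∧ IsAntichain (· ⊆ ·) (α : Set (Finset (Fin N)))}

noncomputable instance (N : ℕ) : Fintype (Antichains N) :=
  Subtype.fintype _

/-- The order on antichains: `α ⪯ β` iff every `b ∈ β` contains some `a ∈ α`. -/
def ple {N : ℕ} (α β : Antichains N) : Prop := ∀ b ∈ β.1, ∃ a ∈ α.1, a ⊆ b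

/-- Strict order on antichains. -/
def plt {N : ℕ} (α β : Antichains N) : Prop := ple α β ∧ α ≠ β

/-- `β` is a lower cover of `α`: `β ≺ α` with nothing strictly in between. -/
def CoveredBy {N : ℕ} (β α : Antichains N) : Prop :=
  plt β α ∧ ∀ γ : Antichains N, plt β γ → plt γ α → False

/-- The network redundancy function `f_∩^α(ω) = min_{a ∈ α} f(ω; E^a)`. -/
noncomputable def fcap {V : Type*} {N : ℕ} (E : Fin N → SimpleGraph V)
    (α : Antichains N) (x y : V) : ℝ :=
  α.1.inf' α.2.1 (fun a => eff (a.sup E) x y)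

namespace FPaux
open Finset

variable {V : Type*} {N : ℕ}

lemma eff_nonneg (G : SimpleGraph V) (x y : V) : 0 ≤ eff G x y := by
  unfold eff; split
  · positivity
  · exact le_refl 0

lemma eff_mono {G H : SimpleGraph V} (h : G ≤ H) (x y : V) : eff G x y ≤ eff H x y := by
  by_cases hr : G.Reachable x y
  · have hr' : H.Reachable x y := hr.mono h
    unfold eff
    simp only [hr, hr', if_true]
    by_cases hxy : x = y
    · subst hxy; simp [SimpleGraph.dist_self]
    · have h1 : 0 < H.dist x y := hr'.pos_dist_of_ne hxy
      have h2 : H.dist x y ≤ G.dist x y := by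
        obtain ⟨p, hp⟩ := hr.exists_walk_length_eq_dist
        calc H.dist x y ≤ (p.mapLe h).length := SimpleGraph.dist_le _
        _ = p.length := by simp
        _ = G.dist x y := hp
      have h1' : (0:ℝ) < (H.dist x y : ℝ) := by exact_mod_cast h1
      have h2' : ((H.dist x y : ℝ)) ≤ (G.dist x y : ℝ) := by exact_mod_cast h2
      exact inv_anti₀ h1' h2'
  · have := eff_nonneg H x y
    unfold eff
    simp only [hr, if_false]
    split <;> [positivity; exact le_refl 0]

/-- minimal elements of a finite family of finsets -/
noncomputable def mins (s : Finset (Finset (Fin N))) : Finset (Finset (Fin N)) :=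
  s.filter (fun a => ∀ b ∈ s, b ⊆ a → b = a)

lemma mins_subset (s : Finset (Finset (Fin N))) : mins s ⊆ s := filter_subset _ _

lemma exists_mins_le {s : Finset (Finset (Fin N))} {b : Finset (Fin N)} (hb : b ∈ s) :
    ∃ a ∈ mins s, a ⊆ b := by
  obtain ⟨a, ha, hmin⟩ := (s.filter (· ⊆ b)).exists_minimal ⟨b, by simp [hb]⟩
  simp only [mem_filter] at ha
  refine ⟨a, ?_, ha.2⟩
  simp only [mins, mem_filter]
  refine ⟨ha.1, fun c hc hca => ?_⟩
  by_contra hne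
  exact hne (subset_antisymm hca (hmin (by simp [hc, hca.trans ha.2]) hca))

/-- meet of two antichains -/
noncomputable def meet (β γ : Antichains N) : Antichains N := by
  refine ⟨mins (β.1 ∪ γ.1), ?_, ?_, ?_⟩
  · obtain ⟨b, hb⟩ := β.2.1
    obtain ⟨a, ha, -⟩ := exists_mins_le (s := β.1 ∪ γ.1) (mem_union_left _ hb)
    exact ⟨a, ha⟩
  · intro a ha
    rcases mem_union.mp (mins_subset _ ha) with h | h
    · exact β.2.2.1 a h
    · exact γ.2.2.1 a h
  · intro a ha b hb hne hsub
    simp only [coe_filter, Set.mem_setOf_eq, mins, mem_coe, mem_filter] at ha hb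
    exact hne (hb.2 a (by exact ha.1) hsub)

lemma ple_meet_iff {γ β δ : Antichains N} : ple γ (meet β δ) ↔ ple γ β ∧ ple γ δ := by
  constructor
  · intro h
    constructor
    · intro b hb
      obtain ⟨a, ha, hab⟩ := exists_mins_le (s := β.1 ∪ δ.1) (mem_union_left _ hb)
      obtain ⟨c, hc, hca⟩ := h a ha
      exact ⟨c, hc, hca.trans hab⟩
    · intro b hb
      obtain ⟨a, ha, hab⟩ := exists_mins_le (s := β.1 ∪ δ.1) (mem_union_right _ hb)
      obtain ⟨c, hc, hca⟩ := h a ha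
      exact ⟨c, hc, hca.trans hab⟩
  · rintro ⟨h1, h2⟩ b hb
    rcases mem_union.mp (mins_subset _ hb) with h | h
    · exact h1 b h
    · exact h2 b h

lemma fcap_meet (E : Fin N → SimpleGraph V) (x y : V) (β δ : Antichains N) :
    fcap E (meet β δ) x y = min (fcap E β x y) (fcap E δ x y) := by
  have hne : (β.1 ∪ δ.1).Nonempty := β.2.1.mono subset_union_left
  have key : fcap E (meet β δ) x y = (β.1 ∪ δ.1).inf' hne (fun a => eff (a.sup E) x y) := by
    apply le_antisymm
    · apply le_inf'
      intro b hb
      obtain ⟨a, ha, hab⟩ := exists_mins_le hb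
      exact le_trans (inf'_le _ ha) (eff_mono (Finset.sup_mono hab) x y)
    · apply le_inf'
      intro b hb
      exact inf'_le _ (mins_subset _ hb)
  rw [key, inf'_union β.2.1 δ.2.1 (fun a => eff (a.sup E) x y)]
  rfl

lemma ple_refl (α : Antichains N) : ple α α := fun b hb => ⟨b, hb, subset_rfl⟩

lemma ple_trans {α β γ : Antichains N} (h1 : ple α β) (h2 : ple β γ) : ple α γ := by
  intro b hb
  obtain ⟨a, ha, hab⟩ := h2 b hb
  obtain ⟨c, hc, hca⟩ := h1 a ha
  exact ⟨c, hc, hca.trans hab⟩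

lemma ple_antisymm_aux {β γ : Antichains N} (h1 : ple β γ) (h2 : ple γ β) : γ.1 ⊆ β.1 := by
  intro b hb
  obtain ⟨a, ha, hab⟩ := h1 b hb
  obtain ⟨b', hb', hba⟩ := h2 a ha
  have hbb : b' = b := by
    by_contra hne
    exact γ.2.2.2 hb' hb hne (hba.trans hab)
  subst hbb
  have : a = b' := subset_antisymm hab hba  -- a ⊆ b = b', b' ⊆ a
  exact this ▸ ha

lemma ple_antisymm {β γ : Antichains N} (h1 : ple β γ) (h2 : ple γ β) : β = γ := by
  apply Subtype.ext
  exact subset_antisymm (ple_antisymm_aux h2 h1) (ple_antisymm_aux h1 h2)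

lemma plt_trans {α β γ : Antichains N} (h1 : plt α β) (h2 : plt β γ) : plt α γ := by
  refine ⟨ple_trans h1.1 h2.1, fun h => ?_⟩
  subst h
  exact h2.2 (ple_antisymm h2.1 h1.1)


lemma sup'_min_right {ι : Type*} (s : Finset ι) (hs : s.Nonempty) (f : ι → ℝ) (c : ℝ) :
    s.sup' hs (fun i => min (f i) c) = min (s.sup' hs f) c := by
  apply le_antisymm
  · apply sup'_le
    intro i hi
    exact min_le_min (le_sup' f hi) le_rfl
  · obtain ⟨i, hi, hival⟩ := exists_mem_eq_sup' hs f
    calc min (s.sup' hs f) c = min (f i) c := by rw [hival]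
    _ ≤ s.sup' hs (fun i => min (f i) c) := le_sup' (fun i => min (f i) c) hi

lemma key_sum [Fintype V] (E : Fin N → SimpleGraph V) (x y : V)
    (fpartial : Antichains N → ℝ)
    (hmoebius : ∀ α : Antichains N,
      fcap E α x y = ∑ β ∈ univ.filter (fun β => ple β α), fpartial β) :
    ∀ n (S : Finset (Antichains N)) (hS : S.Nonempty), S.card ≤ n →
      ∑ γ ∈ univ.filter (fun γ => ∃ β ∈ S, ple γ β), fpartial γ
        = S.sup' hS (fun β => fcap E β x y) := by
  intro n
  induction n with
  | zero => intro S hS hc; have := Finset.card_pos.mpr hS; omega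
  | succ n ih =>
    intro S hS hc
    obtain ⟨β, hβ⟩ := hS
    set T := S.erase β with hT
    have hins : insert β T = S := insert_erase hβ
    by_cases hTne : T.Nonempty
    · -- split
      have hAB : univ.filter (fun γ => ∃ δ ∈ S, ple γ δ)
          = univ.filter (fun γ => ple γ β) ∪ univ.filter (fun γ => ∃ δ ∈ T, ple γ δ) := by
        ext γ
        simp only [mem_union, mem_filter, mem_univ, true_and, ← hins, mem_insert]
        constructor
        · rintro ⟨δ, hδ | hδ, h⟩
          · exact Or.inl (hδ ▸ h)
          · exact Or.inr ⟨δ, hδ, h⟩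
        · rintro (h | ⟨δ, hδ, h⟩)
          · exact ⟨β, Or.inl rfl, h⟩
          · exact ⟨δ, Or.inr hδ, h⟩
      have hInter : univ.filter (fun γ => ple γ β) ∩ univ.filter (fun γ => ∃ δ ∈ T, ple γ δ)
          = univ.filter (fun γ => ∃ ε ∈ T.image (fun δ => FPaux.meet δ β), ple γ ε) := by
        ext γ
        simp only [mem_inter, mem_filter, mem_univ, true_and, mem_image]
        constructor
        · rintro ⟨h1, δ, hδ, h2⟩
          exact ⟨FPaux.meet δ β, ⟨δ, hδ, rfl⟩, FPaux.ple_meet_iff.mpr ⟨h2, h1⟩⟩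
        · rintro ⟨ε, ⟨δ, hδ, rfl⟩, h⟩
          obtain ⟨h2, h1⟩ := FPaux.ple_meet_iff.mp h
          exact ⟨h1, δ, hδ, h2⟩
      have hTcard : T.card ≤ n := by
        have h1 : T.card = S.card - 1 := card_erase_of_mem hβ
        have h2 := Finset.card_pos.mpr (⟨β, hβ⟩ : S.Nonempty)
        omega
      have hIcard : (T.image (fun δ => FPaux.meet δ β)).card ≤ n :=
        le_trans (card_image_le) hTcard
      have hIne : (T.image (fun δ => FPaux.meet δ β)).Nonempty := hTne.image _
      have hsum := sum_union_inter (s₁ := univ.filter (fun γ => ple γ β))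
        (s₂ := univ.filter (fun γ => ∃ δ ∈ T, ple γ δ)) (f := fpartial)
      rw [hInter] at hsum
      have e1 : ∑ γ ∈ univ.filter (fun γ => ple γ β), fpartial γ = fcap E β x y :=
        (hmoebius β).symm
      have e2 := ih T hTne hTcard
      have e3 := ih _ hIne hIcard
      have e3' : (T.image (fun δ => FPaux.meet δ β)).sup' hIne (fun β => fcap E β x y)
          = min (T.sup' hTne (fun β => fcap E β x y)) (fcap E β x y) := by
        rw [sup'_image hIne (fun β => fcap E β x y)]
        rw [show ((fun β => fcap E β x y) ∘ fun δ => FPaux.meet δ β)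
          = fun δ => min (fcap E δ x y) (fcap E β x y) from funext fun δ => FPaux.fcap_meet E x y δ β]
        rw [sup'_congr hIne.of_image rfl (fun δ _ => rfl), sup'_min_right T hTne _ _]
      have e4 : S.sup' ⟨β, hβ⟩ (fun β => fcap E β x y)
          = max (fcap E β x y) (T.sup' hTne (fun β => fcap E β x y)) := by
        have e5 : S.sup' ⟨β, hβ⟩ (fun β => fcap E β x y)
            = (insert β T).sup' (insert_nonempty _ _) (fun β => fcap E β x y) := by
          congr 1
          exact hins.symm
        rw [e5, sup'_insert (H := hTne)]
      rw [hAB, e4]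
      rw [e3'] at e3
      rw [e1, e2, e3] at hsum
      rcases le_total (fcap E β x y) (T.sup' hTne (fun β => fcap E β x y)) with hle | hle
      · rw [max_eq_right hle]
        rw [min_eq_right hle] at hsum
        linarith
      · rw [max_eq_left hle]
        rw [min_eq_left hle] at hsum
        linarith
    · have hSeq : S = {β} := by
        rw [← hins, not_nonempty_iff_eq_empty.mp hTne, LawfulSingleton.insert_empty_eq]
      subst hSeq
      have : univ.filter (fun γ => ∃ δ ∈ ({β} : Finset (Antichains N)), ple γ δ)
          = univ.filter (fun γ => ple γ β) := by
        ext γ; simp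
      rw [this, ← hmoebius β, sup'_singleton]

lemma exists_cover {α : Antichains N} :
    ∀ n (γ δ : Antichains N), (univ.filter (fun ε => plt δ ε)).card ≤ n →
      plt δ α → ple γ δ → ∃ β : Antichains N, CoveredBy β α ∧ ple γ β := by
  intro n
  induction n with
  | zero =>
    intro γ δ hc hδ hγ
    exfalso
    have : α ∈ univ.filter (fun ε => plt δ ε) := by simp [hδ]
    have := card_pos.mpr ⟨α, this⟩
    omega
  | succ n ih =>
    intro γ δ hc hδ hγ
    by_cases hcov : CoveredBy δ α
    · exact ⟨δ, hcov, hγ⟩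
    · simp only [CoveredBy, not_and, not_forall] at hcov
      obtain ⟨ε, hδε, hεα, -⟩ := hcov hδ
      have hsub : univ.filter (fun ζ => plt ε ζ) ⊂ univ.filter (fun ζ => plt δ ζ) := by
        constructor
        · intro ζ hζ
          simp only [mem_filter, mem_univ, true_and] at hζ ⊢
          exact FPaux.plt_trans hδε hζ
        · intro hsub'
          have : ε ∈ univ.filter (fun ζ => plt ε ζ) := hsub' (by simp [hδε])
          simp only [mem_filter, mem_univ, true_and] at this
          exact this.2 rfl
      have hcard : (univ.filter (fun ζ => plt ε ζ)).card ≤ n := by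
        have := card_lt_card hsub
        omega
      exact ih γ ε hcard hεα (FPaux.ple_trans hγ hδε.1)

end FPaux

open Finset in
/-- On the antichain lattice with `f_∩^α(ω) = min_{a∈α} f(ω;E^a)`, the Moebius-inverted
atom satisfies `f_∂^α(ω) = f_∩^α(ω) − max_{β ∈ α⁻} f_∩^β(ω)
= f_∩^α(ω) − max_{β ∈ α⁻} min_{b ∈ β} f(ω;E^b)`, where `α⁻` is the (nonempty) set of
lower covers of `α`. -/
theorem fpartial_eq_fcap_sub_max {V : Type*} [Fintype V] {N : ℕ}
    (E : Fin N → SimpleGraph V) (x y : V) (fpartial : Antichains N → ℝ)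
    (hmoebius : ∀ α : Antichains N,
      fcap E α x y = ∑ β ∈ univ.filter (fun β => ple β α), fpartial β)
    (α : Antichains N)
    (hcov : (univ.filter (fun β : Antichains N => CoveredBy β α)).Nonempty) :
    fpartial α = fcap E α x y -
      (univ.filter (fun β : Antichains N => CoveredBy β α)).sup' hcov
        (fun β => β.1.inf' β.2.1 (fun b => eff (b.sup E) x y)) := by
  classical
  set covers := univ.filter (fun β : Antichains N => CoveredBy β α) with hcovers
  have hplt : univ.filter (fun γ : Antichains N => plt γ α)
      = univ.filter (fun γ => ∃ β ∈ covers, ple γ β) := by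
    ext γ
    simp only [mem_filter, mem_univ, true_and]
    constructor
    · intro h
      obtain ⟨β, hβ, hγβ⟩ := FPaux.exists_cover (univ.filter (fun ε => plt γ ε)).card γ γ
        le_rfl h (FPaux.ple_refl γ)
      exact ⟨β, by rw [hcovers]; simp [hβ], hγβ⟩
    · rintro ⟨β, hβ, h⟩
      rw [hcovers] at hβ
      simp only [mem_filter, mem_univ, true_and] at hβ
      refine ⟨FPaux.ple_trans h hβ.1.1, fun he => ?_⟩
      subst he
      exact hβ.1.2 (FPaux.ple_antisymm hβ.1.1 h)
  have hsplit : univ.filter (fun β : Antichains N => ple β α)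
      = insert α (univ.filter (fun γ : Antichains N => plt γ α)) := by
    ext γ
    simp only [mem_insert, mem_filter, mem_univ, true_and]
    unfold plt
    constructor
    · intro h
      by_cases hγ : γ = α
      · exact Or.inl hγ
      · exact Or.inr ⟨h, hγ⟩
    · rintro (rfl | ⟨h, -⟩)
      · exact FPaux.ple_refl _
      · exact h
  have hα : α ∉ univ.filter (fun γ : Antichains N => plt γ α) := by
    simp only [mem_filter, mem_univ, true_and]
    exact fun h => h.2 rfl
  have hm := hmoebius α
  rw [hsplit, sum_insert hα, hplt,
    FPaux.key_sum E x y fpartial hmoebius covers.card covers hcov le_rfl] at hm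
  have heq : covers.sup' hcov (fun β => fcap E β x y)
      = covers.sup' hcov (fun β => β.1.inf' β.2.1 (fun b => eff (b.sup E) x y)) := rfl
  linarith [hm, heq]
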